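/- Let $a_1,a_2>0$, set $A=(1+a_1)(1+a_2)$, $B=a_1a_2$, and let $N_1,N_2$ be nonnegative integers. Define $g(\alpha_1,\alpha_2)=(3A-4B)\alpha_1+\frac{1+a_1}{a_2}(A-2B)\alpha_2-AN_1-\frac{1+a_1}{a_2}AN_2-\left(4+2\frac{1+a_1}{a_2}\right)(A-B)$ and $h(\alpha_1,\alpha_2)=\frac{4B-A}{A}(\alpha_1-1)+\frac{2a_1}{1+a_2}(\alpha_2-1)-(N_1+1)$, and let $\Sigma=\{(\alpha_1,\alpha_2)\in\mathbb{R}^2 : \alpha_1\ge 1,\ \alpha_2>1,\ g(\alpha_1,\alpha_2)=0,\ h(\alpha_1,\alpha_2)>0\}$. Then $\Sigma\neq\emptyset$ if and only if both of the following hold: $3A-4B>0$, and, in case $A-4B>0$, $(A-4B)(N_1+1)<2a_1(1+a_1)(N_2+1)$. -/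

import Mathlib

open Real

set_option maxHeartbeats 1000000 in
/-- The set `Σ` is nonempty iff `3A - 4B > 0` and, in case `A - 4B > 0`,
`(A-4B)(N₁+1) < 2a₁(1+a₁)(N₂+1)`. -/
theorem sigma_nonempty_iff (a₁ a₂ : ℝ) (ha₁ : 0 < a₁) (ha₂ : 0 < a₂) (N₁ N₂ : ℕ)
    (A B : ℝ) (hA : A = (1 + a₁) * (1 + a₂)) (hB : B = a₁ * a₂)
    (g h : ℝ → ℝ → ℝ)
    (hg : ∀ α₁ α₂ : ℝ, g α₁ α₂ =
      (3 * A - 4 * B) * α₁ + (1 + a₁) / a₂ * (A - 2 * B) * α₂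
        - A * N₁ - (1 + a₁) / a₂ * A * N₂ - (4 + 2 * (1 + a₁) / a₂) * (A - B))
    (hh : ∀ α₁ α₂ : ℝ, h α₁ α₂ =
      (4 * B - A) / A * (α₁ - 1) + 2 * a₁ / (1 + a₂) * (α₂ - 1) - (N₁ + 1)) :
    (∃ α₁ α₂ : ℝ, 1 ≤ α₁ ∧ 1 < α₂ ∧ g α₁ α₂ = 0 ∧ 0 < h α₁ α₂) ↔
      (0 < 3 * A - 4 * B ∧
        (0 < A - 4 * B → (A - 4 * B) * (N₁ + 1) < 2 * a₁ * (1 + a₁) * (N₂ + 1))) := by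
  have ha2 : a₂ ≠ 0 := ne_of_gt ha₂
  have hA0 : 0 < A := by rw [hA]; positivity
  have hA0' : A ≠ 0 := ne_of_gt hA0
  have hB0 : 0 < B := by rw [hB]; positivity
  have h1a2 : (0:ℝ) < 1 + a₂ := by linarith
  have h1a2' : (1:ℝ) + a₂ ≠ 0 := ne_of_gt h1a2
  set c : ℝ := (1 + a₁) / a₂ with hc
  have hc0 : 0 < c := by rw [hc]; positivity
  set P : ℝ := 3 * A - 4 * B with hP
  set Q : ℝ := c * (A - 2 * B) with hQdef
  set K : ℝ := A * N₁ + c * A * N₂ + (4 + 2 * c) * (A - B) with hK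
  set M : ℝ := 2 * N₁ + c * N₂ + 4 + 2 * c with hM
  have hgPQ : ∀ x y : ℝ, g x y = P * x + Q * y - K := by
    intro x y; rw [hg x y, hP, hQdef, hK]; ring
  -- key identity
  have key : ∀ x y : ℝ, A * h x y = A * (2 * x + c * y - M) - g x y := by
    intro x y
    rw [hgPQ x y, hh x y, hP, hQdef, hK, hM, hc, hA, hB]
    field_simp
    ring
  -- g(1,1) < 0
  have hKPQ : P + Q < K := by
    have hN1 : (0:ℝ) ≤ (N₁:ℝ) := Nat.cast_nonneg _
    have hN2 : (0:ℝ) ≤ (N₂:ℝ) := Nat.cast_nonneg _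
    have e : K - P - Q = A * (N₁ + 1) + c * A * (N₂ + 1) := by
      rw [hP, hQdef, hK]; ring
    nlinarith [mul_pos hc0 hA0, mul_nonneg (le_of_lt (mul_pos hc0 hA0)) hN2,
      mul_nonneg (le_of_lt hA0) hN1]
  have hcPQ : c * P - 2 * Q = c * A := by rw [hP, hQdef]; ring
  have hcA : 0 < c * A := mul_pos hc0 hA0
  -- expansion of the crucial quantity
  have expand : c * K - M * Q - c * A
      = c * (2 * a₁ * (1 + a₁) * ((N₂:ℝ) + 1) - (A - 4 * B) * ((N₁:ℝ) + 1)) := by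
    rw [hK, hM, hQdef, hc, hA, hB]; field_simp; ring
  clear_value c P Q K M
  -- from A * t > 0 deduce t > 0
  have hdivA : ∀ t : ℝ, 0 < A * t → 0 < t := by
    intro t ht
    by_contra hcon
    push_neg at hcon
    linarith [mul_nonpos_of_nonneg_of_nonpos hA0.le hcon]
  have hdivc : ∀ t : ℝ, 0 < c * t → 0 < t := by
    intro t ht
    by_contra hcon
    push_neg at hcon
    linarith [mul_nonpos_of_nonneg_of_nonpos hc0.le hcon]
  constructor
  · rintro ⟨x, y, hx, hy, hgz, hhz⟩
    have hid := key x y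
    rw [hgz] at hid
    have hF : M < 2 * x + c * y := by
      have h2 : 0 < A * (2 * x + c * y - M) := by
        rw [← sub_zero (A * (2 * x + c * y - M)), ← hid]
        exact mul_pos hA0 hhz
      linarith [hdivA _ h2]
    have heq : P * x + Q * y - K = 0 := by rw [← hgPQ]; exact hgz
    have hP0 : 0 < P := by
      by_contra hPle
      push_neg at hPle
      have hA2B : A - 2 * B < 0 := by
        have h3 : 3 * A - 4 * B ≤ 0 := by rw [← hP]; exact hPle
        linarith
      have hQneg : Q < 0 := by rw [hQdef]; exact mul_neg_of_pos_of_neg hc0 hA2B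
      linarith [mul_nonpos_of_nonpos_of_nonneg hPle (by linarith : (0:ℝ) ≤ x - 1),
        mul_neg_of_neg_of_pos hQneg (by linarith : (0:ℝ) < y - 1)]
    refine ⟨hP0, ?_⟩
    intro hA4B
    have hQpos : 0 < Q := by
      rw [hQdef]; exact mul_pos hc0 (by linarith)
    have heqc : c * P * x + c * Q * y - c * K = 0 := by linear_combination c * heq
    have t4 : c * P * x - 2 * Q * x = c * A * x := by linear_combination x * hcPQ
    have u1 : Q * M < Q * (2 * x + c * y) := mul_lt_mul_of_pos_left hF hQpos
    have u2 : c * A * 1 ≤ c * A * x := mul_le_mul_of_nonneg_left hx hcA.le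
    have step : c * A < c * K - M * Q := by nlinarith [u1, u2, heqc, t4]
    have hpos : 0 < c * (2 * a₁ * (1 + a₁) * ((N₂:ℝ) + 1) - (A - 4 * B) * ((N₁:ℝ) + 1)) := by
      rw [← expand]; linarith
    linarith [hdivc _ hpos]
  · rintro ⟨hP0, himp⟩
    by_cases hQ0 : 0 < Q
    · -- witnesses x = 1, y = (K - P)/Q
      have htarget : 0 < c * K - M * Q - c * A := by
        rw [expand]
        have hN1 : (0:ℝ) ≤ (N₁:ℝ) := Nat.cast_nonneg _
        have hN2 : (0:ℝ) ≤ (N₂:ℝ) := Nat.cast_nonneg _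
        rcases le_or_gt (A - 4 * B) 0 with hle | hlt
        · have h1 : 0 < 2 * a₁ * (1 + a₁) * ((N₂:ℝ) + 1) := by positivity
          have h2 : (A - 4 * B) * ((N₁:ℝ) + 1) ≤ 0 :=
            mul_nonpos_of_nonpos_of_nonneg hle (by linarith)
          exact mul_pos hc0 (by linarith)
        · exact mul_pos hc0 (by linarith [himp hlt])
      have hgzero : g 1 ((K - P) / Q) = 0 := by
        rw [hgPQ]
        field_simp
        ring
      have hy1 : 1 < (K - P) / Q := by
        rw [lt_div_iff₀ hQ0]; linarith
      refine ⟨1, (K - P) / Q, le_refl 1, hy1, hgzero, ?_⟩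
      have hFpos : 0 < 2 * 1 + c * ((K - P) / Q) - M := by
        have e : 2 * 1 + c * ((K - P) / Q) - M = (2 * Q + c * K - c * P - M * Q) / Q := by
          field_simp; ring
        have hnum : 2 * Q + c * K - c * P - M * Q = c * K - M * Q - c * A := by
          linarith [hcPQ]
        rw [e, hnum]
        exact div_pos htarget hQ0
      have hid := key 1 ((K - P) / Q)
      rw [hgzero] at hid
      apply hdivA
      rw [hid, sub_zero]
      exact mul_pos hA0 hFpos
    · push_neg at hQ0
      obtain ⟨y, hy2, hygt⟩ : ∃ y : ℝ, 2 ≤ y ∧ (M * P - 2 * K) / (c * A) < y :=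
        ⟨max 2 ((M * P - 2 * K) / (c * A) + 1), le_max_left _ _,
          lt_of_lt_of_le (lt_add_one _) (le_max_right _ _)⟩
      have hy1 : 1 < y := by linarith
      have hcAy : M * P - 2 * K < c * A * y := by
        rw [div_lt_iff₀ hcA] at hygt; linarith
      have hQy : Q * y ≤ Q := by
        linarith [mul_nonpos_of_nonpos_of_nonneg hQ0 (by linarith : (0:ℝ) ≤ y - 1)]
      have hx1 : 1 ≤ (K - Q * y) / P := by
        rw [le_div_iff₀ hP0]; linarith
      have hgzero : g ((K - Q * y) / P) y = 0 := by
        rw [hgPQ]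
        field_simp
        ring
      refine ⟨(K - Q * y) / P, y, hx1, hy1, hgzero, ?_⟩
      have e : P * (2 * ((K - Q * y) / P) + c * y - M)
          = 2 * K - 2 * Q * y + c * P * y - M * P := by
        field_simp
      have t4 : c * P * y - 2 * Q * y = c * A * y := by linear_combination y * hcPQ
      have hFpos : 0 < 2 * ((K - Q * y) / P) + c * y - M := by
        have h2 : 0 < P * (2 * ((K - Q * y) / P) + c * y - M) := by
          rw [e]; linarith
        by_contra hcon
        push_neg at hcon
        linarith [mul_nonpos_of_nonneg_of_nonpos hP0.le hcon]
      have hid := key ((K - Q * y) / P) y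
      rw [hgzero] at hid
      apply hdivA
      rw [hid, sub_zero]
      exact mul_pos hA0 hFpos
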